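/- Let N, s ∈ ℕ, Δt > 0, and let D, D₊, D₋ ∈ ℝ^{N×N}. Let Ã, A ∈ ℝ^{s×s} and b̃, b ∈ ℝ^s be ImEx Butcher data with A invertible (a type I method). Define f : ℝ^N → ℝ^N by f(u) = −(1/3)(D(u∘u) + u∘(Du)), where ∘ is the entrywise product. Fix uⁿ, vⁿ, wⁿ ∈ ℝ^N, and for each τ > 0 let stage vectors Uᵢ(τ), Vᵢ(τ), Wᵢ(τ) ∈ ℝ^N (i = 1, …, s) satisfy: Uᵢ(τ) = uⁿ + Δt·Σⱼ ãᵢⱼ f(Uⱼ(τ)) − Δt·Σⱼ aᵢⱼ D₊Wⱼ(τ); Vᵢ(τ) = vⁿ + (Δt/τ)·Σⱼ aᵢⱼ (DVⱼ(τ) − Wⱼ(τ)); Wᵢ(τ) = wⁿ + (Δt/τ)·Σⱼ aᵢⱼ (Vⱼ(τ) − D₋Uⱼ(τ)). Assume that as τ → 0⁺, Uᵢ(τ) → Uᵢ⁰, Vᵢ(τ) → Vᵢ⁰, and Wᵢ(τ) → Wᵢ⁰ for each i. Then: (1) Vⱼ⁰ = D₋Uⱼ⁰ and Wⱼ⁰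 = D Vⱼ⁰ for all j; (2) Uᵢ⁰ = uⁿ + Δt·Σⱼ ãᵢⱼ f(Uⱼ⁰) − Δt·Σⱼ aᵢⱼ D₊DD₋Uⱼ⁰ for all i; and (3) the update uⁿ⁺¹(τ) = uⁿ + Δt·Σⱼ b̃ⱼ f(Uⱼ(τ)) − Δt·Σⱼ bⱼ D₊Wⱼ(τ) converges, as τ → 0⁺, to uⁿ + Δt·Σⱼ b̃ⱼ f(Uⱼ⁰) − Δt·Σⱼ bⱼ D₊DD₋Uⱼ⁰, i.e., to the update of the same ImEx Runge–Kutta method applied to the semidiscrete KdV equation ∂ₜη = f(η) − D₊DD₋η with f treated explicitly and −D₊DD₋η implicitly. Hence the scheme is asymptotic-preserving for the u-component. -/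

import Mathlib

open Filter Matrix

lemma aux_mulVec_inj {s N : ℕ} (A : Matrix (Fin s) (Fin s) ℝ) (hA : IsUnit A)
    (x : Fin s → Fin N → ℝ) (h : ∀ i, ∑ j, A i j • x j = 0) : ∀ j, x j = 0 := by
  intro j
  funext k
  have hd : IsUnit A.det := (Matrix.isUnit_iff_isUnit_det A).mp hA
  set y : Fin s → ℝ := fun j => x j k with hy
  have hAy : A.mulVec y = 0 := by
    funext i
    have := congrFun (h i) k
    simpa [Matrix.mulVec, dotProduct, Finset.sum_apply, hy] using this
  have : y = 0 := by
    have h2 := congrArg (A⁻¹.mulVec) hAy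
    rwa [Matrix.mulVec_mulVec, Matrix.nonsing_inv_mul A hd, Matrix.one_mulVec,
      Matrix.mulVec_zero] at h2
  exact congrFun this j

/-- Asymptotic preservation of type I ImEx Runge–Kutta methods (invertible implicit
Butcher matrix `A`) applied to the split semidiscrete KdVH system: in the relaxation
limit `τ → 0⁺`, the stage limits satisfy `V⁰ = D₋U⁰`, `W⁰ = DV⁰`, the limit stages
solve the same ImEx method applied to the semidiscrete KdV equation
`∂ₜη = f(η) − D₊DD₋η`, and the `u`-update converges to the corresponding KdV update. -/
theorem imex_typeI_asymptotic_preserving (N s : ℕ) (Δt : ℝ) (hΔt : 0 < Δt)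
    (D Dp Dm : Matrix (Fin N) (Fin N) ℝ)
    (Ae A : Matrix (Fin s) (Fin s) ℝ) (be b : Fin s → ℝ)
    (hA : IsUnit A)
    (f : (Fin N → ℝ) → (Fin N → ℝ))
    (hf : ∀ u : Fin N → ℝ, f u = -(1/3 : ℝ) • (D.mulVec (u * u) + u * D.mulVec u))
    (un vn wn : Fin N → ℝ)
    (U V W : ℝ → Fin s → Fin N → ℝ)
    (U0 V0 W0 : Fin s → Fin N → ℝ)
    (hUeq : ∀ τ : ℝ, 0 < τ → ∀ i : Fin s,
      U τ i = un + Δt • (∑ j, Ae i j • f (U τ j))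
        - Δt • (∑ j, A i j • Dp.mulVec (W τ j)))
    (hVeq : ∀ τ : ℝ, 0 < τ → ∀ i : Fin s,
      V τ i = vn + (Δt / τ) • (∑ j, A i j • (D.mulVec (V τ j) - W τ j)))
    (hWeq : ∀ τ : ℝ, 0 < τ → ∀ i : Fin s,
      W τ i = wn + (Δt / τ) • (∑ j, A i j • (V τ j - Dm.mulVec (U τ j))))
    (hUlim : ∀ i, Tendsto (fun τ => U τ i) (nhdsWithin 0 (Set.Ioi 0)) (nhds (U0 i)))
    (hVlim : ∀ i, Tendsto (fun τ => V τ i) (nhdsWithin 0 (Set.Ioi 0)) (nhds (V0 i)))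
    (hWlim : ∀ i, Tendsto (fun τ => W τ i) (nhdsWithin 0 (Set.Ioi 0)) (nhds (W0 i))) :
    (∀ j, V0 j = Dm.mulVec (U0 j) ∧ W0 j = D.mulVec (V0 j)) ∧
    (∀ i, U0 i = un + Δt • (∑ j, Ae i j • f (U0 j))
      - Δt • (∑ j, A i j • (Dp * D * Dm).mulVec (U0 j))) ∧
    Tendsto
      (fun τ => un + Δt • (∑ j, be j • f (U τ j))
        - Δt • (∑ j, b j • Dp.mulVec (W τ j)))
      (nhdsWithin 0 (Set.Ioi 0))
      (nhds (un + Δt • (∑ j, be j • f (U0 j))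
        - Δt • (∑ j, b j • (Dp * D * Dm).mulVec (U0 j)))) := by
  set l := nhdsWithin (0:ℝ) (Set.Ioi 0) with hl
  have hΔt0 : Δt ≠ 0 := ne_of_gt hΔt
  -- continuity of mulVec
  have hDc : ∀ (M : Matrix (Fin N) (Fin N) ℝ),
      Continuous (fun u : Fin N → ℝ => M.mulVec u) := by
    intro M
    apply continuous_pi
    intro i
    simp only [Matrix.mulVec, dotProduct]
    exact continuous_finset_sum _ fun j _ => continuous_const.mul (continuous_apply j)
  have hfc : Continuous f := by
    have hfe : f = fun u => -(1/3 : ℝ) • (D.mulVec (u * u) + u * D.mulVec u) := funext hf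
    rw [hfe]
    exact (((hDc D).comp (continuous_id.mul continuous_id)).add
      (continuous_id.mul (hDc D))).const_smul (-(1/3 : ℝ))
  have htau : Tendsto (fun τ : ℝ => τ / Δt) l (nhds 0) := by
    have := (tendsto_id.mono_left (nhdsWithin_le_nhds : l ≤ nhds 0)).div_const Δt
    simpa using this
  -- step 1: V0, W0 relations
  have hVW : ∀ j, D.mulVec (V0 j) - W0 j = 0 := by
    apply aux_mulVec_inj A hA
    intro i
    have key : ∀ᶠ τ in l, ∑ j, A i j • (D.mulVec (V τ j) - W τ j)
        = (τ / Δt) • (V τ i - vn) := by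
      filter_upwards [self_mem_nhdsWithin] with τ hτ
      have hτ0 : (τ : ℝ) ≠ 0 := ne_of_gt hτ
      have h := hVeq τ hτ i
      have h2 : V τ i - vn = (Δt / τ) • ∑ j, A i j • (D.mulVec (V τ j) - W τ j) := by
        rw [h]; abel
      rw [h2, smul_smul]
      have : τ / Δt * (Δt / τ) = 1 := by field_simp
      rw [this, one_smul]
    have h2 : Tendsto (fun τ => ∑ j, A i j • (D.mulVec (V τ j) - W τ j)) l
        (nhds (∑ j, A i j • (D.mulVec (V0 j) - W0 j))) :=
      tendsto_finset_sum _ fun j _ =>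
        ((((hDc D).tendsto _).comp (hVlim j)).sub (hWlim j)).const_smul _
    have h1 : Tendsto (fun τ : ℝ => (τ / Δt) • (V τ i - vn)) l (nhds 0) := by
      have := htau.smul ((hVlim i).sub (tendsto_const_nhds : Tendsto _ l (nhds vn)))
      simpa using this
    exact tendsto_nhds_unique (h2.congr' key) h1
  have hUV : ∀ j, V0 j - Dm.mulVec (U0 j) = 0 := by
    apply aux_mulVec_inj A hA
    intro i
    have key : ∀ᶠ τ in l, ∑ j, A i j • (V τ j - Dm.mulVec (U τ j))
        = (τ / Δt) • (W τ i - wn) := by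
      filter_upwards [self_mem_nhdsWithin] with τ hτ
      have hτ0 : (τ : ℝ) ≠ 0 := ne_of_gt hτ
      have h := hWeq τ hτ i
      have h2 : W τ i - wn = (Δt / τ) • ∑ j, A i j • (V τ j - Dm.mulVec (U τ j)) := by
        rw [h]; abel
      rw [h2, smul_smul]
      have : τ / Δt * (Δt / τ) = 1 := by field_simp
      rw [this, one_smul]
    have h2 : Tendsto (fun τ => ∑ j, A i j • (V τ j - Dm.mulVec (U τ j))) l
        (nhds (∑ j, A i j • (V0 j - Dm.mulVec (U0 j)))) :=
      tendsto_finset_sum _ fun j _ =>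
        ((hVlim j).sub (((hDc Dm).tendsto _).comp (hUlim j))).const_smul _
    have h1 : Tendsto (fun τ : ℝ => (τ / Δt) • (W τ i - wn)) l (nhds 0) := by
      have := htau.smul ((hWlim i).sub (tendsto_const_nhds : Tendsto _ l (nhds wn)))
      simpa using this
    exact tendsto_nhds_unique (h2.congr' key) h1
  have hV0 : ∀ j, V0 j = Dm.mulVec (U0 j) := fun j => sub_eq_zero.mp (hUV j)
  have hW0 : ∀ j, W0 j = D.mulVec (V0 j) := fun j => (sub_eq_zero.mp (hVW j)).symm
  have hW0' : ∀ j, Dp.mulVec (W0 j) = (Dp * D * Dm).mulVec (U0 j) := by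
    intro j
    rw [hW0 j, hV0 j]
    simp [Matrix.mulVec_mulVec, Matrix.mul_assoc]
  -- limits of the main update pieces
  have hWlimT : ∀ j, Tendsto (fun τ => Dp.mulVec (W τ j)) l
      (nhds ((Dp * D * Dm).mulVec (U0 j))) := by
    intro j
    have := ((hDc Dp).tendsto (W0 j)).comp (hWlim j)
    rwa [hW0' j] at this
  have hflimT : ∀ j, Tendsto (fun τ => f (U τ j)) l (nhds (f (U0 j))) :=
    fun j => (hfc.tendsto _).comp (hUlim j)
  refine ⟨fun j => ⟨hV0 j, hW0 j⟩, ?_, ?_⟩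
  · intro i
    have hrhs : Tendsto (fun τ => un + Δt • (∑ j, Ae i j • f (U τ j))
        - Δt • (∑ j, A i j • Dp.mulVec (W τ j))) l
        (nhds (un + Δt • (∑ j, Ae i j • f (U0 j))
          - Δt • (∑ j, A i j • (Dp * D * Dm).mulVec (U0 j)))) := by
      refine Tendsto.sub (Tendsto.const_add _ ?_) ?_
      · exact (tendsto_finset_sum _ fun j _ => (hflimT j).const_smul _).const_smul _
      · exact (tendsto_finset_sum _ fun j _ => (hWlimT j).const_smul _).const_smul _
    have hlhs : Tendsto (fun τ => U τ i) l (nhds (U0 i)) := hUlim i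
    have heq : ∀ᶠ τ in l, U τ i = un + Δt • (∑ j, Ae i j • f (U τ j))
        - Δt • (∑ j, A i j • Dp.mulVec (W τ j)) := by
      filter_upwards [self_mem_nhdsWithin] with τ hτ
      exact hUeq τ hτ i
    exact tendsto_nhds_unique (hlhs.congr' heq) hrhs
  · refine Tendsto.sub (Tendsto.const_add _ ?_) ?_
    · exact (tendsto_finset_sum _ fun j _ => (hflimT j).const_smul _).const_smul _
    · exact (tendsto_finset_sum _ fun j _ => (hWlimT j).const_smul _).const_smul _
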